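/- The Heaviside step function is a γ-parameter bounding activation for every γ > 0: for every γ > 0, every natural numbers d, l ≥ 1, every compact set U ⊆ ℝ^d, every continuous function h : ℝ^d → ℝ^l, and every ε > 0, there exist n ∈ ℕ and parameters A ∈ ℝ^{l×n}, B ∈ ℝ^{n×d}, b ∈ ℝ^n with every individual entry of A, B, and b lying in the interval [−γ, γ], such that ∫_U ‖h(x) − A·H(Bx + b)‖ dx ≤ ε, where H denotes the Heaviside step function applied entrywise and the integral is with respect to Lebesgue measure on ℝ^d. -/

import Mathlib

open MeasureTheory

/-- The Heaviside step function: `H t = 1` if `t ≥ 0` and `H t = 0` if `t < 0`. -/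
noncomputable def heaviside (t : ℝ) : ℝ := if 0 ≤ t then 1 else 0

lemma heaviside_pos_smul {s : ℝ} (hs : 0 < s) (t : ℝ) :
    heaviside (s * t) = heaviside t := by
  unfold heaviside
  congr 1
  simp [mul_nonneg_iff_of_pos_left hs]

lemma heaviside_nonneg_eq {t : ℝ} (ht : 0 ≤ t) : heaviside t = 1 := if_pos ht

lemma heaviside_neg_eq {t : ℝ} (ht : t < 0) : heaviside t = 0 := if_neg (not_le.mpr ht)

lemma abs_cos_sub_cos_le (a b : ℝ) : |Real.cos a - Real.cos b| ≤ |a - b| := by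
  rw [Real.cos_sub_cos]
  have h1 : |Real.sin ((a + b) / 2)| ≤ 1 := Real.abs_sin_le_one _
  have h2 : |Real.sin ((a - b) / 2)| ≤ |(a - b) / 2| := Real.abs_sin_le_abs
  calc |(-2) * Real.sin ((a + b) / 2) * Real.sin ((a - b) / 2)|
      = 2 * |Real.sin ((a + b) / 2)| * |Real.sin ((a - b) / 2)| := by
        rw [abs_mul, abs_mul]; norm_num
    _ ≤ 2 * 1 * |(a - b) / 2| := by
        apply mul_le_mul _ h2 (abs_nonneg _) (by positivity)
        apply mul_le_mul_of_nonneg_left h1 (by norm_num)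
    _ = |a - b| := by rw [abs_div]; rw [abs_two]; ring

lemma abs_sin_sub_sin_le (a b : ℝ) : |Real.sin a - Real.sin b| ≤ |a - b| := by
  rw [Real.sin_sub_sin]
  have h1 : |Real.cos ((a + b) / 2)| ≤ 1 := Real.abs_cos_le_one _
  have h2 : |Real.sin ((a - b) / 2)| ≤ |(a - b) / 2| := Real.abs_sin_le_abs
  calc |2 * Real.sin ((a - b) / 2) * Real.cos ((a + b) / 2)|
      = 2 * |Real.sin ((a - b) / 2)| * |Real.cos ((a + b) / 2)| := by
        rw [abs_mul, abs_mul]; norm_num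
    _ ≤ 2 * |(a - b) / 2| * 1 := by
        apply mul_le_mul _ h1 (abs_nonneg _) (by positivity)
        apply mul_le_mul_of_nonneg_left h2 (by norm_num)
    _ = |a - b| := by rw [abs_div]; rw [abs_two]; ring

/-- A function representable, for every parameter bound `γ > 0`, as a one-hidden-layer
heaviside network with all parameters bounded by `γ`. -/
def IsNet (d : ℕ) (g : (Fin d → ℝ) → ℝ) : Prop :=
  ∀ γ : ℝ, 0 < γ → ∃ (n : ℕ) (a : Fin n → ℝ) (w : Fin n → Fin d → ℝ) (c : Fin n → ℝ),
    (∀ i, |a i| ≤ γ) ∧ (∀ i q, |w i q| ≤ γ) ∧ (∀ i, |c i| ≤ γ) ∧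
    ∀ x, g x = ∑ i, a i * heaviside ((∑ q, w i q * x q) + c i)

lemma isNet_zero (d : ℕ) : IsNet d 0 := by
  intro γ hγ
  exact ⟨0, ![], ![], ![], by simp, by simp, by simp, by simp⟩

lemma isNet_add {d : ℕ} {f g : (Fin d → ℝ) → ℝ} (hf : IsNet d f) (hg : IsNet d g) :
    IsNet d (f + g) := by
  intro γ hγ
  obtain ⟨n₁, a₁, w₁, c₁, ha₁, hw₁, hc₁, hrep₁⟩ := hf γ hγ
  obtain ⟨n₂, a₂, w₂, c₂, ha₂, hw₂, hc₂, hrep₂⟩ := hg γ hγ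
  refine ⟨n₁ + n₂, Fin.append a₁ a₂, Fin.append w₁ w₂, Fin.append c₁ c₂, ?_, ?_, ?_, ?_⟩
  · intro i
    induction i using Fin.addCases with
    | left i => simpa using ha₁ i
    | right i => simpa using ha₂ i
  · intro i q
    induction i using Fin.addCases with
    | left i => simpa using hw₁ i q
    | right i => simpa using hw₂ i q
  · intro i
    induction i using Fin.addCases with
    | left i => simpa using hc₁ i
    | right i => simpa using hc₂ i
  · intro x
    rw [Pi.add_apply, hrep₁ x, hrep₂ x, Fin.sum_univ_add]
    simp

lemma isNet_smul {d : ℕ} (r : ℝ) {f : (Fin d → ℝ) → ℝ} (hf : IsNet d f) :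
    IsNet d (r • f) := by
  intro γ hγ
  have hγ' : 0 < γ / (|r| + 1) := by positivity
  obtain ⟨n, a, w, c, ha, hw, hc, hrep⟩ := hf _ hγ'
  refine ⟨n, fun i => r * a i, w, c, ?_, ?_, ?_, ?_⟩
  · intro i
    rw [abs_mul]
    calc |r| * |a i| ≤ |r| * (γ / (|r| + 1)) :=
          mul_le_mul_of_nonneg_left (ha i) (abs_nonneg r)
      _ ≤ γ := by
          rw [div_eq_inv_mul, ← mul_assoc]
          have h1 : |r| * (|r| + 1)⁻¹ ≤ 1 := by
            rw [mul_inv_le_iff₀ (by positivity)]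
            linarith [abs_nonneg r]
          nlinarith
  · intro i q
    exact (hw i q).trans (by
      rw [div_le_iff₀ (by positivity)]
      nlinarith [abs_nonneg r, hγ.le])
  · intro i
    exact (hc i).trans (by
      rw [div_le_iff₀ (by positivity)]
      nlinarith [abs_nonneg r, hγ.le])
  · intro x
    rw [Pi.smul_apply, smul_eq_mul, hrep x, Finset.mul_sum]
    simp [mul_assoc]

lemma isNet_heaviside {d : ℕ} (w : Fin d → ℝ) (c : ℝ) :
    IsNet d (fun x => heaviside ((∑ q, w q * x q) + c)) := by
  intro γ hγ
  set D : ℝ := (∑ q, |w q|) + |c| + 1 with hD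
  have hDpos : 0 < D := by
    have : 0 ≤ ∑ q, |w q| := Finset.sum_nonneg fun q _ => abs_nonneg _
    positivity
  set s : ℝ := γ / D with hs
  have hspos : 0 < s := by positivity
  set m : ℕ := ⌈1 / γ⌉₊ with hm
  have hmpos : 0 < m := Nat.ceil_pos.mpr (by positivity)
  have hminv : (1 : ℝ) / m ≤ γ := by
    rw [div_le_iff₀ (by exact_mod_cast hmpos)]
    have h1 : 1 / γ ≤ (m : ℝ) := Nat.le_ceil _
    calc (1:ℝ) = γ * (1 / γ) := by field_simp
      _ ≤ γ * m := mul_le_mul_of_nonneg_left h1 hγ.le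
  refine ⟨m, fun _ => 1 / m, fun _ q => s * w q, fun _ => s * c, ?_, ?_, ?_, ?_⟩
  · intro i
    rwa [abs_of_nonneg (by positivity)]
  · intro i q
    rw [abs_mul, abs_of_nonneg hspos.le, hs, div_mul_eq_mul_div, div_le_iff₀ hDpos]
    have h2 : |w q| ≤ D := by
      have h3 : |w q| ≤ ∑ r, |w r| :=
        Finset.single_le_sum (fun r _ => abs_nonneg (w r)) (Finset.mem_univ q)
      have : 0 ≤ |c| := abs_nonneg c
      rw [hD]; linarith
    nlinarith
  · intro i
    rw [abs_mul, abs_of_nonneg hspos.le, hs, div_mul_eq_mul_div, div_le_iff₀ hDpos]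
    have h2 : |c| ≤ D := by
      have h3 : 0 ≤ ∑ r, |w r| := Finset.sum_nonneg fun r _ => abs_nonneg _
      rw [hD]; linarith
    nlinarith
  · intro x
    have key : (∑ q, s * w q * x q) + s * c = s * ((∑ q, w q * x q) + c) := by
      rw [mul_add, Finset.mul_sum]
      ring_nf
    rw [Finset.sum_const, Finset.card_univ, Fintype.card_fin]
    simp only [key, heaviside_pos_smul hspos]
    rw [nsmul_eq_mul]
    field_simp

lemma isNet_const (d : ℕ) (r : ℝ) : IsNet d (fun _ => r) := by
  have h := isNet_smul (d := d) r (isNet_heaviside (fun _ => 0) 0)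
  have : (r • fun x : Fin d → ℝ => heaviside ((∑ q, (0:ℝ) * x q) + 0)) = fun _ => r := by
    funext x
    simp [heaviside]
  rwa [this] at h

lemma isNet_finsum {d : ℕ} {ι : Type*} (S : Finset ι) (F : ι → (Fin d → ℝ) → ℝ)
    (hF : ∀ i ∈ S, IsNet d (F i)) : IsNet d (fun x => ∑ i ∈ S, F i x) := by
  classical
  induction S using Finset.induction with
  | empty => simp only [Finset.sum_empty]; exact isNet_zero d
  | insert j T hnot ih =>
    have h1 : IsNet d (F j) := hF j (Finset.mem_insert_self j T)
    have h2 : IsNet d (fun x => ∑ i ∈ T, F i x) :=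
      ih fun i hi => hF i (Finset.mem_insert_of_mem hi)
    have := isNet_add h1 h2
    have heq : (F j + fun x => ∑ i ∈ T, F i x) = fun x => ∑ i ∈ insert j T, F i x := by
      funext x
      simp [Finset.sum_insert hnot]
    rwa [heq] at this

/-- Staircase approximation of a 1-Lipschitz ridge function by a heaviside network. -/
lemma step_approx {d : ℕ} {U : Set (Fin d → ℝ)} (hU : IsCompact U)
    (g : ℝ → ℝ) (hg : ∀ a b, |g a - g b| ≤ |a - b|) (w : Fin d → ℝ)
    {δ : ℝ} (hδ : 0 < δ) :
    ∃ f, IsNet d f ∧ ∀ x ∈ U, |g (∑ q, w q * x q) - f x| ≤ δ := by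
  classical
  obtain ⟨R, hR⟩ := hU.isBounded.exists_norm_le
  set C : ℝ := (∑ q, |w q|) * (|R| + 1) + 1 with hC
  have hwnn : 0 ≤ ∑ q, |w q| := Finset.sum_nonneg fun q _ => abs_nonneg _
  have hCpos : 0 < C := by positivity
  have hbound : ∀ x ∈ U, |∑ q, w q * x q| ≤ C := by
    intro x hx
    calc |∑ q, w q * x q| ≤ ∑ q, |w q * x q| := Finset.abs_sum_le_sum_abs _ _
      _ ≤ ∑ q, |w q| * (|R| + 1) := by
          apply Finset.sum_le_sum
          intro q _
          rw [abs_mul]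
          apply mul_le_mul_of_nonneg_left _ (abs_nonneg _)
          have h1 : |x q| ≤ ‖x‖ := by
            simpa using norm_le_pi_norm x q
          have := hR x hx
          have : ‖x‖ ≤ |R| := this.trans (le_abs_self R)
          linarith
      _ = (∑ q, |w q|) * (|R| + 1) := by rw [← Finset.sum_mul]
      _ ≤ C := by rw [hC]; linarith
  set N : ℕ := ⌈2 * C / δ⌉₊ + 1 with hN
  have hNpos : 0 < N := Nat.succ_pos _
  set η : ℝ := 2 * C / N with hη
  have hηpos : 0 < η := by positivity
  have hηδ : η ≤ δ := by
    rw [hη, div_le_iff₀ (by exact_mod_cast hNpos)]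
    have h1 : 2 * C / δ ≤ (N : ℝ) := by
      rw [hN]
      push_cast
      linarith [Nat.le_ceil (2 * C / δ)]
    calc 2 * C = δ * (2 * C / δ) := by field_simp
      _ ≤ δ * N := mul_le_mul_of_nonneg_left h1 hδ.le
  set t : ℕ → ℝ := fun i => -C + i * η with ht
  set f : (Fin d → ℝ) → ℝ := fun x =>
    g (t 0) + ∑ i ∈ Finset.range N, (g (t (i + 1)) - g (t i)) *
      heaviside ((∑ q, w q * x q) + (-(t (i + 1)))) with hf
  have hnet : IsNet d f := by
    have h1 : IsNet d (fun _ => g (t 0)) := isNet_const d _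
    have h2 : IsNet d (fun x => ∑ i ∈ Finset.range N, (g (t (i + 1)) - g (t i)) *
        heaviside ((∑ q, w q * x q) + (-(t (i + 1))))) := by
      apply isNet_finsum
      intro i _
      have := isNet_smul (g (t (i + 1)) - g (t i))
        (isNet_heaviside w (-(t (i + 1))))
      convert this using 1
      funext x; rfl
    have := isNet_add h1 h2
    convert this using 1
    funext x; rfl
  refine ⟨f, hnet, ?_⟩
  intro x hx
  set s : ℝ := ∑ q, w q * x q with hsv
  have hsC : |s| ≤ C := hbound x hx
  have hsCnn : 0 ≤ s + C := by
    have := abs_le.mp hsC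
    linarith [this.1]
  set k : ℕ := min N ⌊(s + C) / η⌋₊ with hk
  have hkN : k ≤ N := min_le_left _ _
  have hkfl : k ≤ ⌊(s + C) / η⌋₊ := min_le_right _ _
  have hkη : (k : ℝ) * η ≤ s + C := by
    have h1 : (k : ℝ) ≤ (s + C) / η := by
      calc (k : ℝ) ≤ (⌊(s + C) / η⌋₊ : ℝ) := by exact_mod_cast hkfl
        _ ≤ (s + C) / η := Nat.floor_le (by positivity)
    calc (k : ℝ) * η ≤ ((s + C) / η) * η := mul_le_mul_of_nonneg_right h1 hηpos.le
      _ = s + C := by field_simp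
  -- the heaviside units fire exactly for i < k
  have hfire : ∀ i ∈ Finset.range k, heaviside (s + (-(t (i + 1)))) = 1 := by
    intro i hi
    have hik : i + 1 ≤ k := Finset.mem_range.mp hi
    apply heaviside_nonneg_eq
    have h1 : ((i : ℝ) + 1) * η ≤ (k : ℝ) * η := by
      apply mul_le_mul_of_nonneg_right _ hηpos.le
      exact_mod_cast hik
    rw [ht]
    push_cast
    nlinarith
  have hnofire : ∀ i ∈ Finset.range N, i ∉ Finset.range k →
      heaviside (s + (-(t (i + 1)))) = 0 := by
    intro i hiN hik
    have hiN' : i < N := Finset.mem_range.mp hiN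
    have hik' : k ≤ i := le_of_not_gt (fun hc => hik (Finset.mem_range.mpr hc))
    have hkfloor : k = ⌊(s + C) / η⌋₊ := by
      rcases Nat.lt_or_ge ⌊(s + C) / η⌋₊ N with hlt | hge
      · rw [hk, min_eq_right hlt.le]
      · exfalso
        have : k = N := by rw [hk, min_eq_left hge]
        omega
    have hfl : ⌊(s + C) / η⌋₊ ≤ i := hkfloor ▸ hik'
    apply heaviside_neg_eq
    have h1 : (s + C) / η < i + 1 := by
      calc (s + C) / η < ⌊(s + C) / η⌋₊ + 1 := Nat.lt_floor_add_one _
        _ ≤ i + 1 := by exact_mod_cast Nat.add_le_add_right hfl 1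
    have h2 : s + C < ((i : ℝ) + 1) * η := by
      rw [div_lt_iff₀ hηpos] at h1
      linarith
    rw [ht]
    push_cast
    nlinarith
  have hfval : f x = g (t k) := by
    rw [hf]
    simp only [← hsv]
    rw [← Finset.sum_subset (Finset.range_subset_range.mpr hkN)
      (fun i hi hni => by rw [hnofire i hi hni, mul_zero])]
    have : ∀ i ∈ Finset.range k, (g (t (i + 1)) - g (t i)) *
        heaviside (s + (-(t (i + 1)))) = g (t (i + 1)) - g (t i) := by
      intro i hi
      rw [hfire i hi, mul_one]
    rw [Finset.sum_congr rfl this, Finset.sum_range_sub (fun i => g (t i))]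
    ring
  rw [hfval]
  have htk_le : t k ≤ s := by
    rw [ht]
    simp only
    linarith
  have hs_le : s - t k ≤ η := by
    rcases eq_or_lt_of_le hkN with heq | hlt
    · -- k = N : then s ≤ C = t N
      have htN : t N = C := by
        rw [ht]
        simp only
        rw [hη]
        field_simp
        ring
      have : s ≤ C := (abs_le.mp hsC).2
      rw [heq, htN]
      linarith
    · -- k = floor
      have hkfloor : k = ⌊(s + C) / η⌋₊ := by
        rcases Nat.lt_or_ge ⌊(s + C) / η⌋₊ N with h | hge
        · rw [hk, min_eq_right h.le]
        · exfalso
          have : k = N := by rw [hk, min_eq_left hge]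
          omega
      have h1 : (s + C) / η < (k : ℝ) + 1 := by
        rw [hkfloor]
        push_cast
        exact Nat.lt_floor_add_one _
      have h2 : s + C < ((k : ℝ) + 1) * η := by
        rw [div_lt_iff₀ hηpos] at h1
        linarith
      rw [ht]
      simp only
      nlinarith
  calc |g s - g (t k)| ≤ |s - t k| := hg s (t k)
    _ ≤ η := by rw [abs_of_nonneg (by linarith)]; linarith
    _ ≤ δ := hηδ

section Trig

variable {d : ℕ} (U : Set (Fin d → ℝ))

/-- Cosine of a linear form, as a continuous map on `U`. -/
noncomputable def trigCos (w : Fin d → ℝ) : C(↥U, ℝ) :=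
  ⟨fun x => Real.cos (∑ q, w q * (x : Fin d → ℝ) q), by
    apply Real.continuous_cos.comp
    apply continuous_finset_sum
    intro q _
    exact continuous_const.mul ((continuous_apply q).comp continuous_subtype_val)⟩

/-- Sine of a linear form, as a continuous map on `U`. -/
noncomputable def trigSin (w : Fin d → ℝ) : C(↥U, ℝ) :=
  ⟨fun x => Real.sin (∑ q, w q * (x : Fin d → ℝ) q), by
    apply Real.continuous_sin.comp
    apply continuous_finset_sum
    intro q _
    exact continuous_const.mul ((continuous_apply q).comp continuous_subtype_val)⟩

/-- The generating set of trigonometric ridge functions. -/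
def trigSet : Set C(↥U, ℝ) :=
  {f | ∃ w : Fin d → ℝ, f = trigCos U w ∨ f = trigSin U w}

lemma linform_add (w v : Fin d → ℝ) (x : ↥U) :
    (∑ q, (w + v) q * (x : Fin d → ℝ) q)
      = (∑ q, w q * (x : Fin d → ℝ) q) + (∑ q, v q * (x : Fin d → ℝ) q) := by
  rw [← Finset.sum_add_distrib]
  apply Finset.sum_congr rfl
  intro q _
  simp [add_mul]

lemma linform_sub (w v : Fin d → ℝ) (x : ↥U) :
    (∑ q, (w - v) q * (x : Fin d → ℝ) q)
      = (∑ q, w q * (x : Fin d → ℝ) q) - (∑ q, v q * (x : Fin d → ℝ) q) := by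
  rw [← Finset.sum_sub_distrib]
  apply Finset.sum_congr rfl
  intro q _
  simp [sub_mul]

lemma trig_mul_mem (p q : C(↥U, ℝ)) (hp : p ∈ trigSet U) (hq : q ∈ trigSet U) :
    p * q ∈ Submodule.span ℝ (trigSet U) := by
  obtain ⟨w, hw⟩ := hp
  obtain ⟨v, hv⟩ := hq
  have memC : ∀ u : Fin d → ℝ, trigCos U u ∈ Submodule.span ℝ (trigSet U) :=
    fun u => Submodule.subset_span ⟨u, Or.inl rfl⟩
  have memS : ∀ u : Fin d → ℝ, trigSin U u ∈ Submodule.span ℝ (trigSet U) :=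
    fun u => Submodule.subset_span ⟨u, Or.inr rfl⟩
  rcases hw with hw | hw <;> rcases hv with hv | hv <;> subst hw hv
  · -- cos * cos = (cos(w-v) + cos(w+v))/2
    have key : trigCos U w * trigCos U v
        = (1/2 : ℝ) • trigCos U (w - v) + (1/2 : ℝ) • trigCos U (w + v) := by
      ext x
      simp only [ContinuousMap.mul_apply, ContinuousMap.add_apply, ContinuousMap.smul_apply,
        trigCos, ContinuousMap.coe_mk, smul_eq_mul, linform_add, linform_sub]
      rw [Real.cos_sub, Real.cos_add]
      ring
    rw [key]
    exact Submodule.add_mem _ (Submodule.smul_mem _ _ (memC _)) (Submodule.smul_mem _ _ (memC _))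
  · -- cos w * sin v = (sin(w+v) - sin(w-v))/2
    have key : trigCos U w * trigSin U v
        = (1/2 : ℝ) • trigSin U (w + v) - (1/2 : ℝ) • trigSin U (w - v) := by
      ext x
      simp only [ContinuousMap.mul_apply, ContinuousMap.sub_apply, ContinuousMap.smul_apply,
        trigCos, trigSin, ContinuousMap.coe_mk, smul_eq_mul, linform_add, linform_sub]
      rw [Real.sin_add, Real.sin_sub]
      ring
    rw [key]
    exact Submodule.sub_mem _ (Submodule.smul_mem _ _ (memS _)) (Submodule.smul_mem _ _ (memS _))
  · -- sin w * cos v = (sin(w+v) + sin(w-v))/2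
    have key : trigSin U w * trigCos U v
        = (1/2 : ℝ) • trigSin U (w + v) + (1/2 : ℝ) • trigSin U (w - v) := by
      ext x
      simp only [ContinuousMap.mul_apply, ContinuousMap.add_apply, ContinuousMap.smul_apply,
        trigCos, trigSin, ContinuousMap.coe_mk, smul_eq_mul, linform_add, linform_sub]
      rw [Real.sin_add, Real.sin_sub]
      ring
    rw [key]
    exact Submodule.add_mem _ (Submodule.smul_mem _ _ (memS _)) (Submodule.smul_mem _ _ (memS _))
  · -- sin w * sin v = (cos(w-v) - cos(w+v))/2
    have key : trigSin U w * trigSin U v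
        = (1/2 : ℝ) • trigCos U (w - v) - (1/2 : ℝ) • trigCos U (w + v) := by
      ext x
      simp only [ContinuousMap.mul_apply, ContinuousMap.sub_apply, ContinuousMap.smul_apply,
        trigCos, trigSin, ContinuousMap.coe_mk, smul_eq_mul, linform_add, linform_sub]
      rw [Real.cos_sub, Real.cos_add]
      ring
    rw [key]
    exact Submodule.sub_mem _ (Submodule.smul_mem _ _ (memC _)) (Submodule.smul_mem _ _ (memC _))

lemma trig_span_mul_mem {p q : C(↥U, ℝ)} (hp : p ∈ Submodule.span ℝ (trigSet U))
    (hq : q ∈ Submodule.span ℝ (trigSet U)) : p * q ∈ Submodule.span ℝ (trigSet U) := by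
  induction hp using Submodule.span_induction with
  | mem f hf =>
    induction hq using Submodule.span_induction with
    | mem g hg => exact trig_mul_mem U f g hf hg
    | zero => simpa using Submodule.zero_mem _
    | add g₁ g₂ _ _ ih₁ ih₂ => rw [mul_add]; exact Submodule.add_mem _ ih₁ ih₂
    | smul r g _ ih => rw [mul_smul_comm]; exact Submodule.smul_mem _ _ ih
  | zero => simpa using Submodule.zero_mem _
  | add f₁ f₂ _ _ ih₁ ih₂ => rw [add_mul]; exact Submodule.add_mem _ ih₁ ih₂
  | smul r f _ ih => rw [smul_mul_assoc]; exact Submodule.smul_mem _ _ ih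

/-- The trigonometric ridge functions form a subalgebra of `C(U, ℝ)`. -/
noncomputable def trigAlg : Subalgebra ℝ C(↥U, ℝ) :=
  (Submodule.span ℝ (trigSet U)).toSubalgebra
    (by
      have : (1 : C(↥U, ℝ)) = trigCos U 0 := by
        ext x
        simp [trigCos]
      rw [this]
      exact Submodule.subset_span ⟨0, Or.inl rfl⟩)
    (fun _ _ => trig_span_mul_mem U)

lemma trigAlg_separates : (trigAlg U).SeparatesPoints := by
  intro x y hxy
  have hval : (x : Fin d → ℝ) ≠ (y : Fin d → ℝ) := fun hc => hxy (Subtype.ext hc)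
  obtain ⟨q, hq⟩ : ∃ q, (x : Fin d → ℝ) q ≠ (y : Fin d → ℝ) q := by
    by_contra hc
    push_neg at hc
    exact hval (funext hc)
  set D : ℝ := (x : Fin d → ℝ) q - (y : Fin d → ℝ) q with hD
  have hDne : D ≠ 0 := sub_ne_zero.mpr hq
  set τ : ℝ := 1 / (1 + |D|) with hτ
  have hτpos : 0 < τ := by positivity
  have hsmall : |τ * D| < 1 := by
    rw [abs_mul, abs_of_nonneg hτpos.le, hτ]
    rw [div_mul_eq_mul_div, div_lt_iff₀ (by positivity)]
    have := abs_pos.mpr hDne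
    linarith
  set w : Fin d → ℝ := fun r => if r = q then τ else 0 with hw
  have hlin : ∀ z : ↥U, (∑ r, w r * (z : Fin d → ℝ) r) = τ * (z : Fin d → ℝ) q := by
    intro z
    rw [hw]
    rw [Finset.sum_eq_single q]
    · simp
    · intro r _ hr
      simp [hr]
    · simp
  set a : ℝ := τ * (x : Fin d → ℝ) q with ha
  set b : ℝ := τ * (y : Fin d → ℝ) q with hb
  have hab : a - b = τ * D := by rw [ha, hb, hD]; ring
  have habs : |(a - b) / 2| < 1 := by
    rw [hab, abs_div]
    have : |(2:ℝ)| = 2 := by norm_num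
    rw [this]
    linarith
  have hne : a ≠ b := by
    intro hc
    rw [hc] at hab
    have : τ * D = 0 := by linarith
    rcases mul_eq_zero.mp this with h | h
    · exact hτpos.ne' h
    · exact hDne h
  have hsin_ne : Real.sin ((a - b) / 2) ≠ 0 := by
    intro hc
    have hpi : (1 : ℝ) < Real.pi := by linarith [Real.pi_gt_three]
    have h1 : -Real.pi < (a - b) / 2 := by
      have := abs_lt.mp habs
      linarith [this.1]
    have h2 : (a - b) / 2 < Real.pi := by
      have := abs_lt.mp habs
      linarith [this.2]
    have := (Real.sin_eq_zero_iff_of_lt_of_lt h1 h2).mp hc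
    apply hne
    linarith
  by_cases hcos : Real.cos a = Real.cos b
  · -- then sin must differ
    refine ⟨_, ⟨trigSin U w, Submodule.subset_span ⟨w, Or.inr rfl⟩, rfl⟩, ?_⟩
    simp only [trigSin, ContinuousMap.coe_mk, hlin]
    rw [← ha, ← hb]
    intro hc
    have hcs : Real.cos a - Real.cos b = 0 := by rw [hcos]; ring
    have hss : Real.sin a - Real.sin b = 0 := by rw [hc]; ring
    rw [Real.cos_sub_cos] at hcs
    rw [Real.sin_sub_sin] at hss
    have h1 : Real.sin ((a + b) / 2) = 0 := by
      rcases mul_eq_zero.mp hcs with h | h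
      · rcases mul_eq_zero.mp h with h' | h'
        · norm_num at h'
        · exact h'
      · exact absurd h hsin_ne
    have h2 : Real.cos ((a + b) / 2) = 0 := by
      rcases mul_eq_zero.mp hss with h | h
      · rcases mul_eq_zero.mp h with h' | h'
        · norm_num at h'
        · exact absurd h' hsin_ne
      · exact h
    have := Real.sin_sq_add_cos_sq ((a + b) / 2)
    rw [h1, h2] at this
    norm_num at this
  · refine ⟨_, ⟨trigCos U w, Submodule.subset_span ⟨w, Or.inl rfl⟩, rfl⟩, ?_⟩
    simp only [trigCos, ContinuousMap.coe_mk, hlin]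
    rw [← ha, ← hb]
    exact hcos

/-- Stone–Weierstrass: trigonometric ridge functions are uniformly dense. -/
lemma trig_dense (hU : IsCompact U) (F : C(↥U, ℝ)) {δ : ℝ} (hδ : 0 < δ) :
    ∃ f ∈ Submodule.span ℝ (trigSet U), ∀ x : ↥U, |F x - f x| ≤ δ := by
  haveI : CompactSpace ↥U := isCompact_iff_compactSpace.mp hU
  have htop := ContinuousMap.subalgebra_topologicalClosure_eq_top_of_separatesPoints
    (trigAlg U) (trigAlg_separates U)
  have hF : F ∈ (trigAlg U).topologicalClosure := by
    rw [htop]; trivial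
  have hFc : F ∈ closure ((trigAlg U) : Set C(↥U, ℝ)) := hF
  obtain ⟨f, hfmem, hdist⟩ := Metric.mem_closure_iff.mp hFc δ hδ
  refine ⟨f, hfmem, fun x => ?_⟩
  have h1 : dist (F x) (f x) ≤ dist F f := ContinuousMap.dist_apply_le_dist x
  rw [Real.dist_eq] at h1
  linarith
end Trig

/-- Every element of the span of trigonometric ridge functions is uniformly approximable
on `U` by heaviside networks. -/
lemma span_trig_approx {d : ℕ} {U : Set (Fin d → ℝ)} (hU : IsCompact U)
    {f : C(↥U, ℝ)} (hf : f ∈ Submodule.span ℝ (trigSet U)) :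
    ∀ δ : ℝ, 0 < δ → ∃ g, IsNet d g ∧ ∀ x : ↥U, |f x - g x| ≤ δ := by
  induction hf using Submodule.span_induction with
  | mem f hf =>
    intro δ hδ
    obtain ⟨w, hw | hw⟩ := hf
    · obtain ⟨g, hg, hb⟩ := step_approx hU Real.cos abs_cos_sub_cos_le w hδ
      exact ⟨g, hg, fun x => by rw [hw]; exact hb x x.2⟩
    · obtain ⟨g, hg, hb⟩ := step_approx hU Real.sin abs_sin_sub_sin_le w hδ
      exact ⟨g, hg, fun x => by rw [hw]; exact hb x x.2⟩
  | zero =>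
    intro δ hδ
    exact ⟨0, isNet_zero d, fun x => by simpa using hδ.le⟩
  | add f₁ f₂ _ _ ih₁ ih₂ =>
    intro δ hδ
    obtain ⟨g₁, hn₁, hb₁⟩ := ih₁ (δ / 2) (by positivity)
    obtain ⟨g₂, hn₂, hb₂⟩ := ih₂ (δ / 2) (by positivity)
    refine ⟨g₁ + g₂, isNet_add hn₁ hn₂, fun x => ?_⟩
    have h1 := hb₁ x
    have h2 := hb₂ x
    simp only [ContinuousMap.add_apply, Pi.add_apply]
    calc |f₁ x + f₂ x - (g₁ x + g₂ x)| = |(f₁ x - g₁ x) + (f₂ x - g₂ x)| := by ring_nf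
      _ ≤ |f₁ x - g₁ x| + |f₂ x - g₂ x| := abs_add_le _ _
      _ ≤ δ / 2 + δ / 2 := add_le_add h1 h2
      _ = δ := by ring
  | smul r f _ ih =>
    intro δ hδ
    by_cases hr : r = 0
    · refine ⟨0, isNet_zero d, fun x => ?_⟩
      simp [hr, hδ.le]
    · obtain ⟨g, hn, hb⟩ := ih (δ / |r|) (by positivity)
      refine ⟨r • g, isNet_smul r hn, fun x => ?_⟩
      have h1 := hb x
      simp only [ContinuousMap.smul_apply, Pi.smul_apply, smul_eq_mul]
      calc |r * f x - r * g x| = |r| * |f x - g x| := by rw [← abs_mul]; ring_nf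
        _ ≤ |r| * (δ / |r|) := mul_le_mul_of_nonneg_left h1 (abs_nonneg r)
        _ = δ := by field_simp

/-- The Heaviside step function is a `γ`-parameter bounding activation for every `γ > 0`:
any continuous function on a compact set can be approximated in `L¹` (with the ℓ¹ norm on
the output) by a one-hidden-layer Heaviside network all of whose individual parameters lie
in `[-γ, γ]`. -/
theorem heaviside_parameter_bounding
    (γ : ℝ) (hγ : 0 < γ) (d l : ℕ) (hd : 1 ≤ d) (hl : 1 ≤ l)
    (U : Set (Fin d → ℝ)) (hU : IsCompact U)
    (h : (Fin d → ℝ) → Fin l → ℝ) (hh : Continuous h)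
    (ε : ℝ) (hε : 0 < ε) :
    ∃ (n : ℕ) (A : Matrix (Fin l) (Fin n) ℝ) (B : Matrix (Fin n) (Fin d) ℝ) (b : Fin n → ℝ),
      (∀ p i, |A p i| ≤ γ) ∧ (∀ i q, |B i q| ≤ γ) ∧ (∀ i, |b i| ≤ γ) ∧
      (∫ x in U, ∑ p, |h x p - A.mulVec (fun i => heaviside (B.mulVec x i + b i)) p|) ≤ ε := by
  classical
  set V : ℝ := (volume U).toReal with hV
  have hVnn : 0 ≤ V := ENNReal.toReal_nonneg
  set δ : ℝ := ε / ((l : ℝ) * V + 1) with hδdef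
  have hδpos : 0 < δ := by positivity
  -- approximate each component uniformly on U within δ
  have Hcomp : ∀ p : Fin l, ∃ g, IsNet d g ∧ ∀ x : ↥U, |h x p - g x| ≤ δ := by
    intro p
    set F : C(↥U, ℝ) := ⟨fun x => h x p, ((continuous_apply p).comp
      (hh.comp continuous_subtype_val))⟩ with hF
    obtain ⟨f, hfmem, hfb⟩ := trig_dense U hU F (δ := δ / 2) (by positivity)
    obtain ⟨g, hgnet, hgb⟩ := span_trig_approx hU hfmem (δ / 2) (by positivity)
    refine ⟨g, hgnet, fun x => ?_⟩
    have h1 := hfb x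
    have h2 := hgb x
    have : F x = h x p := rfl
    calc |h (x : Fin d → ℝ) p - g x| = |(F x - f x) + (f x - g x)| := by
          rw [this]; ring_nf
      _ ≤ |F x - f x| + |f x - g x| := abs_add_le _ _
      _ ≤ δ / 2 + δ / 2 := add_le_add h1 h2
      _ = δ := by ring
  choose g hgnet hgb using Hcomp
  choose np a wp c ha hw hc hrep using fun p => hgnet p γ hγ
  -- assemble the networks into one
  set σ := (p : Fin l) × Fin (np p) with hσ
  set e : σ ≃ Fin (Fintype.card σ) := Fintype.equivFin σ with he
  set n : ℕ := Fintype.card σ with hn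
  refine ⟨n, fun p k => if (e.symm k).1 = p then a (e.symm k).1 (e.symm k).2 else 0,
    fun k q => wp (e.symm k).1 (e.symm k).2 q,
    fun k => c (e.symm k).1 (e.symm k).2, ?_, ?_, ?_, ?_⟩
  · intro p k
    dsimp only
    split
    · exact ha _ _
    · simpa using hγ.le
  · intro k q
    exact hw _ _ q
  · intro k
    exact hc _ _
  · -- the integral bound
    have net_eq : ∀ (x : Fin d → ℝ) (p : Fin l),
        (Matrix.mulVec (fun p k => if (e.symm k).1 = p then a (e.symm k).1 (e.symm k).2 else 0)
          (fun k => heaviside (Matrix.mulVec (fun k q => wp (e.symm k).1 (e.symm k).2 q) x k +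
            c (e.symm k).1 (e.symm k).2))) p = g p x := by
      intro x p
      have step1 : (Matrix.mulVec (fun p k => if (e.symm k).1 = p then
            a (e.symm k).1 (e.symm k).2 else 0)
          (fun k => heaviside (Matrix.mulVec (fun k q => wp (e.symm k).1 (e.symm k).2 q) x k +
            c (e.symm k).1 (e.symm k).2))) p
          = ∑ s : σ, (if s.1 = p then a s.1 s.2 else 0) *
              heaviside ((∑ q, wp s.1 s.2 q * x q) + c s.1 s.2) := by
        simp only [Matrix.mulVec, dotProduct]
        apply Fintype.sum_equiv e.symm
        intro k
        simp [Matrix.mulVec, dotProduct]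
      rw [step1, ← Finset.univ_sigma_univ, Finset.sum_sigma]
      have step2 : ∀ p' : Fin l, (∑ i : Fin (np p'), (if p' = p then a p' i else 0) *
            heaviside ((∑ q, wp p' i q * x q) + c p' i))
          = if p' = p then (∑ i : Fin (np p'), a p' i *
              heaviside ((∑ q, wp p' i q * x q) + c p' i)) else 0 := by
        intro p'
        split
        · rfl
        · simp
      calc (∑ p' : Fin l, ∑ i : Fin (np p'), (if p' = p then a p' i else 0) *
              heaviside ((∑ q, wp p' i q * x q) + c p' i))
          = ∑ p' : Fin l, if p' = p then (∑ i : Fin (np p'), a p' i *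
              heaviside ((∑ q, wp p' i q * x q) + c p' i)) else 0 :=
            Finset.sum_congr rfl fun p' _ => step2 p'
        _ = ∑ i : Fin (np p), a p i * heaviside ((∑ q, wp p i q * x q) + c p i) := by
            rw [Finset.sum_ite_eq' Finset.univ p]
            simp
        _ = g p x := (hrep p x).symm
    set Net : (Fin d → ℝ) → Fin l → ℝ := fun x =>
      Matrix.mulVec (fun p k => if (e.symm k).1 = p then a (e.symm k).1 (e.symm k).2 else 0)
        (fun k => heaviside (Matrix.mulVec (fun k q => wp (e.symm k).1 (e.symm k).2 q) x k +
          c (e.symm k).1 (e.symm k).2)) with hNet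
    have hGb : ∀ x ∈ U, ‖∑ p, |h x p - Net x p|‖ ≤ (l : ℝ) * δ := by
      intro x hx
      have h1 : ∀ p : Fin l, |h x p - Net x p| ≤ δ := by
        intro p
        rw [hNet]
        simp only
        rw [net_eq x p]
        exact hgb p ⟨x, hx⟩
      have h2 : (∑ p, |h x p - Net x p|) ≤ (l : ℝ) * δ := by
        calc (∑ p, |h x p - Net x p|) ≤ ∑ _p : Fin l, δ :=
              Finset.sum_le_sum fun p _ => h1 p
          _ = (l : ℝ) * δ := by
              rw [Finset.sum_const, Finset.card_univ, Fintype.card_fin, nsmul_eq_mul]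
      rw [Real.norm_eq_abs, abs_of_nonneg (Finset.sum_nonneg fun p _ => abs_nonneg _)]
      exact h2
    have hμ : volume U < ⊤ := hU.measure_lt_top
    have hmeas : MeasurableSet U := hU.isClosed.measurableSet
    have key := norm_setIntegral_le_of_norm_le_const hμ hGb
    calc (∫ x in U, ∑ p, |h x p - Net x p|)
        ≤ ‖∫ x in U, ∑ p, |h x p - Net x p|‖ := le_abs_self _
      _ ≤ ((l : ℝ) * δ) * V := key
      _ ≤ ε := by
          have hl0 : (0:ℝ) ≤ l := Nat.cast_nonneg l
          have h2 : (0:ℝ) < (l:ℝ) * V + 1 := by positivity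
          rw [hδdef, show (l:ℝ) * (ε / ((l:ℝ) * V + 1)) * V
              = ε * ((l:ℝ) * V) / ((l:ℝ) * V + 1) by field_simp]
          rw [div_le_iff₀ h2]
          nlinarith
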